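/- Let R be a finite commutative ring with identity and P a proper prime ideal. Every maximal clique of Γ_P(R) has the form (P \ {0}) ∪ {v} for some v ∈ R \ P; consequently the clique number of Γ_P(R) equals |P|. -/

import Mathlib

def primeIdealGraph (R : Type*) [CommRing R] (P : Ideal R) :
    SimpleGraph {x : R // x ≠ 0} where
  Adj x y := x ≠ y ∧ (x : R) * y ∈ P
  symm := by
    constructor
    rintro x y ⟨h, hm⟩
    exact ⟨h.symm, by rwa [mul_comm]⟩
  loopless := by constructor; rintro x ⟨h, _⟩; exact h rfl

def joinGraph {α β : Type*} (G : SimpleGraph α) (H : SimpleGraph β) :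
    SimpleGraph (α ⊕ β) where
  Adj u v :=
    Sum.elim (fun x => Sum.elim (fun y => G.Adj x y) (fun _ => True) v)
             (fun x => Sum.elim (fun _ => True) (fun y => H.Adj x y) v) u
  symm := by constructor; rintro (x|x) (y|y) h <;> simp_all [SimpleGraph.adj_comm]
  loopless := by constructor; rintro (x|x) h <;> simp_all

/-- Every maximal clique of `Γ_P(R)` is `(P \ {0}) ∪ {v}` for some `v ∉ P`;
consequently the clique number of `Γ_P(R)` equals `|P|`. -/
theorem stmt_4 (R : Type*) [CommRing R] [Fintype R] (P : Ideal R)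
    [P.IsPrime] (hP : P ≠ ⊤) :
    (∀ s : Set {z : R // z ≠ 0},
        Maximal (primeIdealGraph R P).IsClique s →
        ∃ v : {z : R // z ≠ 0}, (v : R) ∉ P ∧
          s = {x : {z : R // z ≠ 0} | (x : R) ∈ P} ∪ {v}) ∧
    IsGreatest {n : ℕ | ∃ s : Finset {z : R // z ≠ 0},
        (primeIdealGraph R P).IsNClique n s} (Nat.card P) := by
  classical
  have h1P : (1:R) ∉ P := fun h => hP ((Ideal.eq_top_iff_one P).mpr h)
  have h1 : (1 : R) ≠ 0 := by
    intro h
    exact h1P (h ▸ P.zero_mem)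
  set one : {z : R // z ≠ 0} := ⟨1, h1⟩ with hone_def
  constructor
  · intro s hs
    have hsub : ∀ x : {z : R // z ≠ 0}, (x:R) ∈ P → x ∈ s := by
      intro x hx
      have hcl : (primeIdealGraph R P).IsClique (insert x s) := by
        apply hs.1.insert
        intro y hy hne
        exact ⟨hne, P.mul_mem_right _ hx⟩
      exact hs.2 hcl (Set.subset_insert x s) (Set.mem_insert x s)
    have hv : ∃ v ∈ s, (v:R) ∉ P := by
      by_contra h
      push_neg at h
      have hone : one ∉ s := fun hm => h1P (h one hm)
      have hcl : (primeIdealGraph R P).IsClique (insert one s) := by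
        apply hs.1.insert
        intro y hy hne
        exact ⟨hne, by simpa [hone_def] using P.mul_mem_left 1 (h y hy)⟩
      exact hone (hs.2 hcl (Set.subset_insert _ _) (Set.mem_insert _ _))
    obtain ⟨v, hvs, hvP⟩ := hv
    refine ⟨v, hvP, ?_⟩
    ext x
    constructor
    · intro hx
      by_cases hxP : (x:R) ∈ P
      · exact Or.inl hxP
      · right
        by_contra hne
        have hne' : x ≠ v := fun e => hne (by simpa using e)
        have hadj : (primeIdealGraph R P).Adj x v := hs.1 hx hvs hne'
        rcases Ideal.IsPrime.mem_or_mem ‹P.IsPrime› hadj.2 with h | h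
        · exact hxP h
        · exact hvP h
    · rintro (hx | hx)
      · exact hsub x hx
      · exact (by simpa using hx : x = v) ▸ hvs
  · have hcardP : Nat.card P = (Finset.univ.filter (fun r : R => r ∈ P)).card := by
      rw [Nat.card_eq_fintype_card]
      exact Fintype.card_subtype _
    set A : Finset {z : R // z ≠ 0} :=
      Finset.univ.filter (fun x : {z : R // z ≠ 0} => (x:R) ∈ P) with hA_def
    set B : Finset R := Finset.univ.filter (fun r : R => r ∈ P) with hB_def
    have h0B : (0:R) ∈ B := by simp [hB_def, P.zero_mem]
    have himg : A.image Subtype.val = B.erase 0 := by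
      ext r
      simp only [hA_def, hB_def, Finset.mem_image, Finset.mem_filter, Finset.mem_univ,
        true_and, Finset.mem_erase]
      constructor
      · rintro ⟨⟨x, hx0⟩, hxP, rfl⟩; exact ⟨hx0, hxP⟩
      · rintro ⟨hr0, hrP⟩; exact ⟨⟨r, hr0⟩, hrP, rfl⟩
    have hAB : A.card + 1 = B.card := by
      have h1 : A.card = (B.erase 0).card := by
        rw [← himg, Finset.card_image_of_injective _ Subtype.val_injective]
      rw [h1, Finset.card_erase_add_one h0B]
    constructor
    · refine ⟨insert one A, ?_, ?_⟩
      · intro x hx y hy hne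
        simp only [Finset.coe_insert, Set.mem_insert_iff, hA_def, Finset.coe_filter,
          Set.mem_setOf_eq, Finset.mem_univ, true_and] at hx hy
        refine ⟨hne, ?_⟩
        rcases hx with rfl | hx
        · rcases hy with rfl | hy
          · exact absurd rfl hne
          · exact P.mul_mem_left _ hy
        · exact P.mul_mem_right _ hx
      · have hone : one ∉ A := by simp [hA_def, h1P, hone_def]
        rw [Finset.card_insert_of_notMem hone, hcardP]; exact hAB
    · rintro n ⟨t, ht⟩
      rw [hcardP, ← ht.2]
      set f : {z : R // z ≠ 0} → R := fun x => if (x:R) ∈ P then x else 0 with hf_def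
      apply Finset.card_le_card_of_injOn f
      · intro x _
        by_cases hx : (x:R) ∈ P <;> simp [hf_def, hB_def, hx, P.zero_mem]
      · intro x hx y hy hxy
        by_contra hne
        have hadj : (primeIdealGraph R P).Adj x y := ht.1 hx hy hne
        by_cases hxP : (x:R) ∈ P <;> by_cases hyP : (y:R) ∈ P
        · exact hne (Subtype.ext (by simpa [hf_def, hxP, hyP] using hxy))
        · exact x.2 (by simpa [hf_def, hxP, hyP] using hxy)
        · exact y.2 (by simpa [hf_def, hxP, hyP] using hxy.symm)
        · rcases Ideal.IsPrime.mem_or_mem ‹P.IsPrime› hadj.2 with h | h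
          · exact hxP h
          · exact hyP h
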